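/- Let q ≥ 1 be a natural number, let X be a finite simple (q+1)-regular graph with adjacency matrix A, and let N ≥ 1 be a natural number. Then there exists a function h : ℂ → ℂ, holomorphic on Ω, such that h(u)^N = det(I - u·A + qu²·I) for all u ∈ Ω. (In other words, the polynomial det Δ(X,u) = det(I - u·A + qu²·I) has an analytic N-th root on Ω.) -/

import Mathlib

/-- The interior `Ω` of the region `C`: `|u| < q^(-1/2)`, and if `u` is real
then `|u| < 1/q`. -/
def Omega (q : ℝ) : Set ℂ :=
  {u : ℂ | ‖u‖ < (Real.sqrt q)⁻¹ ∧ (u.im = 0 → |u.re| < 1 / q)}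

open scoped NNReal

lemma factor_mem_slitPlane (q : ℕ) (hq : 1 ≤ q) (l : ℝ) (hl : |l| ≤ q + 1)
    {u : ℂ} (hu : u ∈ Omega q) :
    (1 - u * (l : ℂ) + (q : ℂ) * u ^ 2) ∈ Complex.slitPlane := by
  obtain ⟨h1, h2⟩ := hu
  have hq' : (1 : ℝ) ≤ q := by exact_mod_cast hq
  have hqpos : (0 : ℝ) < q := by linarith
  by_contra hcon
  rw [Complex.mem_slitPlane_iff] at hcon
  push_neg at hcon
  obtain ⟨hre, him⟩ := hcon
  set x := u.re with hx
  set y := u.im with hy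
  have hfre : (1 - u * (l : ℂ) + (q : ℂ) * u ^ 2).re
      = 1 - x * l + q * (x ^ 2 - y ^ 2) := by
    simp [Complex.add_re, Complex.sub_re, Complex.mul_re, Complex.mul_im, sq]
    try ring
  have hfim : (1 - u * (l : ℂ) + (q : ℂ) * u ^ 2).im
      = y * (2 * q * x - l) := by
    simp [Complex.add_im, Complex.sub_im, Complex.mul_re, Complex.mul_im, sq]
    try ring
  have habs : x ^ 2 + y ^ 2 < 1 / q := by
    have h1' := mul_self_lt_mul_self (norm_nonneg u) h1
    rw [Complex.norm_mul_self_eq_normSq] at h1'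
    have : (Real.sqrt q)⁻¹ * (Real.sqrt q)⁻¹ = 1 / q := by
      rw [← mul_inv, Real.mul_self_sqrt hqpos.le, one_div]
    rw [this, Complex.normSq_apply] at h1'
    nlinarith [h1']
  rw [hfre] at hre
  rw [hfim] at him
  rcases mul_eq_zero.mp him with hy0 | hkey
  · -- u is real
    have hxlt := h2 hy0
    have hl1 := abs_le.mp hl
    have hx1 : x < 1 / q := (abs_lt.mp hxlt).2
    have hx2 : -(1 / q) < x := (abs_lt.mp hxlt).1
    have hqx1 : x * q < 1 := by
      have h := mul_lt_mul_of_pos_right hx1 hqpos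
      rwa [one_div, inv_mul_cancel₀ hqpos.ne'] at h
    have hqx2 : -1 < x * q := by
      have h := mul_lt_mul_of_pos_right hx2 hqpos
      rwa [neg_mul, one_div, inv_mul_cancel₀ hqpos.ne'] at h
    rw [hy0] at hre
    rcases le_or_gt 0 x with hxs | hxs
    · have hxl : x * l ≤ x * (q + 1) := mul_le_mul_of_nonneg_left hl1.2 hxs
      have hx3 : x < 1 := by nlinarith
      nlinarith [mul_pos (show (0:ℝ) < 1 - x * q by linarith)
        (show (0:ℝ) < 1 - x by linarith)]
    · have hxl : x * l ≤ x * (-(q + 1)) := mul_le_mul_of_nonpos_left hl1.1 hxs.le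
      have hx3 : -1 < x := by nlinarith
      nlinarith [mul_pos (show (0:ℝ) < 1 + x * q by linarith)
        (show (0:ℝ) < 1 + x by linarith)]
  · have hlx : l = 2 * q * x := by linarith
    rw [hlx] at hre
    have hq2 : (x ^ 2 + y ^ 2) * q < 1 := (lt_div_iff₀ hqpos).mp habs
    ring_nf at hre hq2
    linarith

/-- For a finite simple `(q+1)`-regular graph `X` with adjacency matrix `A`,
the polynomial `det Δ(X,u) = det(I - u·A + qu²·I)` has an analytic `N`-th
root on `Ω`. -/
theorem det_delta_has_analytic_nth_root (q : ℕ) (hq : 1 ≤ q)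
    {V : Type*} [Fintype V] [DecidableEq V]
    (G : SimpleGraph V) [DecidableRel G.Adj]
    (hreg : G.IsRegularOfDegree (q + 1)) (N : ℕ) (hN : 1 ≤ N) :
    ∃ h : ℂ → ℂ, DifferentiableOn ℂ h (Omega q) ∧
      ∀ u ∈ Omega q,
        h u ^ N =
          ((1 : Matrix V V ℂ) - u • G.adjMatrix ℂ
            + ((q : ℂ) * u ^ 2) • (1 : Matrix V V ℂ)).det := by
  classical
  set A : Matrix V V ℂ := G.adjMatrix ℂ with hAdef
  have hA : A.IsHermitian := by
    show A.conjTranspose = A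
    ext i j
    simp [hAdef, Matrix.conjTranspose_apply, SimpleGraph.adjMatrix_apply,
      apply_ite (star : ℂ → ℂ), G.adj_comm i j]
  set lam : V → ℝ := hA.eigenvalues with hlam
  -- eigenvalue bound
  have hbound : ∀ i : V, |lam i| ≤ (q : ℝ) + 1 := by
    intro i
    haveI : Nonempty V := ⟨i⟩
    letI := Matrix.linftyOpNormedAddCommGroup (m := V) (n := V) (α := ℂ)
    letI := Matrix.linftyOpNormedRing (n := V) (α := ℂ)
    letI := Matrix.linftyOpNormedAlgebra (R := ℝ) (n := V) (α := ℂ)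
    have hmem := hA.eigenvalues_mem_spectrum_real i
    have hle : ‖lam i‖ ≤ ‖A‖ := spectrum.norm_le_norm_of_mem hmem
    have hnorm : ‖A‖ ≤ (q : ℝ) + 1 := by
      rw [Matrix.linfty_opNorm_def]
      have : ((Finset.univ : Finset V).sup fun i : V => ∑ j : V, ‖A i j‖₊)
          ≤ ((q : ℝ≥0) + 1) := by
        apply Finset.sup_le
        intro v _
        have hrow : ∀ j : V, ‖A v j‖₊ = if G.Adj v j then 1 else 0 := by
          intro j
          simp [hAdef, SimpleGraph.adjMatrix_apply, apply_ite (nnnorm : ℂ → NNReal)]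
        calc (∑ j : V, ‖A v j‖₊) = ∑ j : V, (if G.Adj v j then (1 : ℝ≥0) else 0) := by
              simp [hrow]
          _ = ((Finset.univ.filter (G.Adj v)).card : ℝ≥0) := by
              rw [Finset.sum_boole]
          _ ≤ ((q : ℝ≥0) + 1) := by
              rw [← SimpleGraph.neighborFinset_eq_filter]
              have hd : (G.neighborFinset v).card = q + 1 := hreg v
              rw [hd]
              push_cast
              exact le_refl _
      calc ((((Finset.univ : Finset V).sup fun i : V => ∑ j : V, ‖A i j‖₊) : ℝ≥0) : ℝ)
          ≤ (((q : ℝ≥0) + 1 : ℝ≥0) : ℝ) := by exact_mod_cast this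
        _ = (q : ℝ) + 1 := by push_cast; ring
    calc |lam i| = ‖lam i‖ := rfl
      _ ≤ ‖A‖ := hle
      _ ≤ (q : ℝ) + 1 := hnorm
  -- determinant as a product over eigenvalues
  have hUU : (hA.eigenvectorUnitary : Matrix V V ℂ)
      * star (hA.eigenvectorUnitary : Matrix V V ℂ) = 1 :=
    (Matrix.mem_unitaryGroup_iff).mp hA.eigenvectorUnitary.2
  have hdet : ∀ u : ℂ,
      ((1 : Matrix V V ℂ) - u • A + ((q : ℂ) * u ^ 2) • (1 : Matrix V V ℂ)).det
        = ∏ i : V, (1 - u * (lam i : ℂ) + (q : ℂ) * u ^ 2) := by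
    intro u
    have hdiag : Matrix.diagonal (fun i : V => 1 - u * (lam i : ℂ) + (q : ℂ) * u ^ 2)
        = (1 : Matrix V V ℂ) - u • Matrix.diagonal (Complex.ofReal ∘ lam)
          + ((q : ℂ) * u ^ 2) • (1 : Matrix V V ℂ) := by
      ext i j
      by_cases hij : i = j
      · subst hij
        simp [Matrix.diagonal_apply_eq, Matrix.one_apply_eq]
        try ring
      · simp [Matrix.diagonal_apply_ne _ hij, Matrix.one_apply_ne hij]
    have key : (1 : Matrix V V ℂ) - u • A + ((q : ℂ) * u ^ 2) • (1 : Matrix V V ℂ)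
        = (hA.eigenvectorUnitary : Matrix V V ℂ)
          * Matrix.diagonal (fun i : V => 1 - u * (lam i : ℂ) + (q : ℂ) * u ^ 2)
          * star (hA.eigenvectorUnitary : Matrix V V ℂ) := by
      rw [hdiag]
      conv_lhs => rw [hA.spectral_theorem]
      simp only [Matrix.mul_sub, Matrix.sub_mul, Matrix.mul_add, Matrix.add_mul,
        Matrix.mul_smul, Matrix.smul_mul, Matrix.mul_one, Matrix.one_mul, mul_one, one_mul]
      rw [hUU]
      try rfl
    have hUU' : star (hA.eigenvectorUnitary : Matrix V V ℂ)
        * (hA.eigenvectorUnitary : Matrix V V ℂ) = 1 :=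
      (Matrix.mem_unitaryGroup_iff').mp hA.eigenvectorUnitary.2
    rw [key, Matrix.det_mul, Matrix.det_mul, mul_comm, ← mul_assoc, ← Matrix.det_mul, hUU']
    simp [Matrix.det_diagonal]
  -- the analytic N-th root
  refine ⟨fun u => ∏ i : V, Complex.exp ((N : ℂ)⁻¹
      * Complex.log (1 - u * (lam i : ℂ) + (q : ℂ) * u ^ 2)), ?_, ?_⟩
  · intro u hu
    apply DifferentiableAt.differentiableWithinAt
    apply DifferentiableAt.fun_finsetProd
    intro i _
    have hfd : DifferentiableAt ℂ (fun u : ℂ => 1 - u * (lam i : ℂ) + (q : ℂ) * u ^ 2) u := by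
      fun_prop
    have hslit := factor_mem_slitPlane q hq (lam i) (hbound i) hu
    exact (((Complex.differentiableAt_log hslit).comp u hfd).const_mul _).cexp
  · intro u hu
    rw [hdet u, ← Finset.prod_pow]
    apply Finset.prod_congr rfl
    intro i _
    have hslit := factor_mem_slitPlane q hq (lam i) (hbound i) hu
    rw [← Complex.exp_nat_mul, ← mul_assoc, mul_inv_cancel₀ (by exact_mod_cast hN.trans_lt' (by norm_num) |>.ne' : (N : ℂ) ≠ 0), one_mul,
      Complex.exp_log (Complex.slitPlane_ne_zero hslit)]
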